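/- Let PM : ℝ^d × ℝ^d → ℝ^{2d} be the Prony mapping, PM(A, X) = (m_0(F_{A,X}), ..., m_{2d−1}(F_{A,X})) with m_k(F_{A,X}) = ∑_{j=1}^d a_j x_j^k, and let (A^0, X^0) be a point with nodes X^0 ⊂ [−1/2, 1/2] pairwise separated by at least ρ > 0 and amplitudes satisfying 0 < m ≤ |a^0_j| ≤ M. Let L = {(0, ..., 0, t) : t ∈ ℝ} ⊂ ℝ^{2d} be the last coordinate axis. Then the preimage line JPM^{−1}(L) of L under the Jacobian JPM = D PM(A^0, X^0) is not contained in the amplitude subspace ℝ^d × {0} ⊂ ℝ^d × ℝ^d; moreover, the angle that the line JPM^{−1}(L) forms with the subspace ℝ^d × {0} is bounded from below by a positive constant depending only on m, M, d, ρ. -/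

import Mathlib

/-- The Prony mapping `PM : ℝ^d × ℝ^d → ℝ^{2d}`,
`PM(A, X) = (m_0(F_{A,X}), …, m_{2d−1}(F_{A,X}))` with
`m_k(F_{A,X}) = ∑ j, A j · (X j)^k`.  The domain carries the Euclidean (`L²`)
norm via `WithLp 2`. -/
noncomputable def Prony (d : ℕ)
    (p : WithLp 2 (EuclideanSpace ℝ (Fin d) × EuclideanSpace ℝ (Fin d))) :
    EuclideanSpace ℝ (Fin (2 * d)) :=
  WithLp.toLp 2 fun k : Fin (2 * d) =>
    ∑ j, (WithLp.equiv 2 _ p).1 j * ((WithLp.equiv 2 _ p).2 j) ^ (k : ℕ)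

namespace PronyAux

abbrev Ee (d : ℕ) := EuclideanSpace ℝ (Fin d)
abbrev Pp (d : ℕ) := WithLp 2 (Ee d × Ee d)

noncomputable def aL (d : ℕ) (j : Fin d) : Pp d →L[ℝ] ℝ :=
  (EuclideanSpace.proj j).comp ((ContinuousLinearMap.fst ℝ (Ee d) (Ee d)).comp
    (WithLp.prodContinuousLinearEquiv 2 ℝ (Ee d) (Ee d)).toContinuousLinearMap)
noncomputable def xL (d : ℕ) (j : Fin d) : Pp d →L[ℝ] ℝ :=
  (EuclideanSpace.proj j).comp ((ContinuousLinearMap.snd ℝ (Ee d) (Ee d)).comp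
    (WithLp.prodContinuousLinearEquiv 2 ℝ (Ee d) (Ee d)).toContinuousLinearMap)

lemma aL_apply (d : ℕ) (j : Fin d) (p : Pp d) : aL d j p = (WithLp.equiv 2 _ p).1 j := rfl
lemma xL_apply (d : ℕ) (j : Fin d) (p : Pp d) : xL d j p = (WithLp.equiv 2 _ p).2 j := rfl

noncomputable def sndC (d : ℕ) : Pp d →L[ℝ] Ee d :=
  (ContinuousLinearMap.snd ℝ (Ee d) (Ee d)).comp
    (WithLp.prodContinuousLinearEquiv 2 ℝ (Ee d) (Ee d)).toContinuousLinearMap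

lemma sndC_apply (d : ℕ) (p : Pp d) : sndC d p = (WithLp.equiv 2 _ p).2 := rfl

noncomputable def Tmap (d : ℕ) (p : Pp d) : Pp d →L[ℝ] EuclideanSpace ℝ (Fin (2*d)) :=
  ((PiLp.continuousLinearEquiv 2 ℝ (fun _ : Fin (2*d) => ℝ)).symm :
      (∀ _ : Fin (2*d), ℝ) →L[ℝ] EuclideanSpace ℝ (Fin (2*d))).comp
    (ContinuousLinearMap.pi fun k : Fin (2*d) =>
      ∑ j, (aL d j p • ((((k:ℕ):ℝ) * xL d j p ^ ((k:ℕ)-1)) • xL d j) +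
        xL d j p ^ (k:ℕ) • aL d j))

lemma Tmap_apply (d : ℕ) (p v : Pp d) (k : Fin (2*d)) :
    Tmap d p v k = ∑ j, ((WithLp.equiv 2 _ v).1 j * (WithLp.equiv 2 _ p).2 j ^ (k:ℕ) +
      ((k:ℕ):ℝ) * (WithLp.equiv 2 _ p).1 j * (WithLp.equiv 2 _ p).2 j ^ ((k:ℕ)-1) *
        (WithLp.equiv 2 _ v).2 j) := by
  simp [Tmap, ContinuousLinearMap.sum_apply, aL_apply, xL_apply]
  exact Finset.sum_congr rfl fun x _ => by ring

lemma prony_hasFDerivAt (d : ℕ) (p : Pp d) : HasFDerivAt (Prony d) (Tmap d p) p := by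
  have h : HasFDerivAt
      (fun q : Pp d => (fun k : Fin (2*d) => ∑ j, aL d j q * xL d j q ^ (k:ℕ)))
      (ContinuousLinearMap.pi fun k : Fin (2*d) =>
        ∑ j, (aL d j p • ((((k:ℕ):ℝ) * xL d j p ^ ((k:ℕ)-1)) • xL d j) +
          xL d j p ^ (k:ℕ) • aL d j)) p := by
    apply hasFDerivAt_pi''
    intro k
    exact HasFDerivAt.fun_sum fun j _ =>
      (aL d j).hasFDerivAt.mul
        ((hasDerivAt_pow (k:ℕ) (xL d j p)).comp_hasFDerivAt p (xL d j).hasFDerivAt)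
  exact ((PiLp.continuousLinearEquiv 2 ℝ (fun _ : Fin (2*d) => ℝ)).symm.comp_hasFDerivAt_iff).mpr h

lemma continuous_Tk (d : ℕ) (k : Fin (2*d)) :
    Continuous fun q : Pp d × Pp d => Tmap d q.1 q.2 k := by
  simp only [Tmap_apply, ← aL_apply, ← xL_apply]
  fun_prop

lemma euclid_norm_le (d : ℕ) (x : Ee d) (C : ℝ) (hC : 0 ≤ C) (h : ∀ j, |x j| ≤ C) :
    ‖x‖ ≤ Real.sqrt d * C := by
  rw [EuclideanSpace.norm_eq]
  have hs : ∑ j, ‖x j‖^2 ≤ ∑ _j : Fin d, C^2 := by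
    apply Finset.sum_le_sum
    intro j _
    rw [Real.norm_eq_abs]
    exact pow_le_pow_left₀ (abs_nonneg _) (h j) 2
  calc Real.sqrt (∑ j, ‖x j‖^2) ≤ Real.sqrt (∑ _j : Fin d, C^2) := Real.sqrt_le_sqrt hs
    _ = Real.sqrt (d * C^2) := by rw [Finset.sum_const]; simp [mul_comm]
    _ = Real.sqrt d * C := by
        rw [Real.sqrt_mul (by positivity), Real.sqrt_sq hC]

lemma sqrt_sq_add_sq_le (a b : ℝ) (ha : 0 ≤ a) (hb : 0 ≤ b) :
    Real.sqrt (a^2 + b^2) ≤ a + b := by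
  calc Real.sqrt (a^2 + b^2) ≤ Real.sqrt ((a+b)^2) := Real.sqrt_le_sqrt (by nlinarith)
    _ = a + b := Real.sqrt_sq (by positivity)

lemma key (M ρ : ℝ) (d : ℕ) (hd : 1 ≤ d) (hρ : 0 < ρ) (hM : 0 ≤ M) :
    ∃ ε > (0:ℝ), ∀ p v : Pp d,
      (∀ j, (WithLp.equiv 2 _ p).2 j ∈ Set.Icc (-(1/2):ℝ) (1/2)) →
      (∀ i j : Fin d, i ≠ j →
        ρ ≤ |(WithLp.equiv 2 _ p).2 i - (WithLp.equiv 2 _ p).2 j|) →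
      (∀ j, |(WithLp.equiv 2 _ p).1 j| ≤ M) →
      ‖v‖ = 1 →
      (∀ k : Fin (2*d), (k:ℕ) ≠ 2*d-1 → Tmap d p v k = 0) →
      ε ≤ ‖(WithLp.equiv 2 _ v).2‖ := by
  classical
  set S : Set (Pp d × Pp d) := {q |
    (∀ j, (WithLp.equiv 2 _ q.1).2 j ∈ Set.Icc (-(1/2):ℝ) (1/2)) ∧
    (∀ i j : Fin d, i ≠ j →
      ρ ≤ |(WithLp.equiv 2 _ q.1).2 i - (WithLp.equiv 2 _ q.1).2 j|) ∧
    (∀ j, |(WithLp.equiv 2 _ q.1).1 j| ≤ M) ∧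
    ‖q.2‖ = 1 ∧
    (∀ k : Fin (2*d), (k:ℕ) ≠ 2*d-1 → Tmap d q.1 q.2 k = 0)} with hS
  have hpos : ∀ q ∈ S, 0 < ‖(WithLp.equiv 2 _ q.2).2‖ := by
    rintro ⟨p, v⟩ ⟨hIcc, hsep, hA, hv1, hTk⟩
    rcases eq_or_lt_of_le (norm_nonneg ((WithLp.equiv 2 _ v).2)) with h0 | h
    · exfalso
      have hvX : (WithLp.equiv 2 _ v).2 = 0 := by simpa using h0.symm
      have hXinj : Function.Injective ((WithLp.equiv 2 _ p).2 : Fin d → ℝ) := by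
        intro i j hij
        by_contra hne
        have hcon := hsep i j hne
        rw [hij] at hcon
        simp at hcon
        linarith
      have hvA : ((WithLp.equiv 2 _ v).1 : Fin d → ℝ) = 0 := by
        apply Matrix.eq_zero_of_forall_pow_sum_mul_pow_eq_zero hXinj
        intro i
        have hlt : (i : ℕ) < 2 * d := by omega
        have hne : ((⟨(i:ℕ), hlt⟩ : Fin (2*d)) : ℕ) ≠ 2*d - 1 := by
          simp only [Fin.val_mk]
          omega
        have hz := hTk ⟨(i:ℕ), hlt⟩ hne
        rw [Tmap_apply] at hz
        simp only [hvX] at hz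
        simpa using hz
      have hv0 : v = 0 := by
        have h1 : ‖v‖ = Real.sqrt (‖v.fst‖^2 + ‖v.snd‖^2) := WithLp.prod_norm_eq_of_L2 v
        have h2 : (v.fst : Ee d) = (WithLp.equiv 2 _ v).1 := rfl
        have h3 : (v.snd : Ee d) = (WithLp.equiv 2 _ v).2 := rfl
        rw [h2, h3, show (WithLp.equiv 2 _ v).1 = 0 from PiLp.ext fun i => by simpa using congrFun hvA i, hvX] at h1
        simp at h1
        exact h1
      rw [hv0] at hv1
      simp at hv1
    · exact h
  rcases S.eq_empty_or_nonempty with hemp | hne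
  · refine ⟨1, one_pos, fun p v h1 h2 h3 h4 h5 => ?_⟩
    have hmem : (p,v) ∈ S := ⟨h1, h2, h3, h4, h5⟩
    rw [hemp] at hmem
    exact absurd hmem (Set.notMem_empty _)
  · have hclosed : IsClosed S := by
      rw [hS]
      simp only [Set.setOf_and]
      refine IsClosed.inter ?_ (IsClosed.inter ?_ (IsClosed.inter ?_ (IsClosed.inter ?_ ?_)))
      · rw [Set.setOf_forall]
        refine isClosed_iInter fun j => ?_
        have hc : Continuous fun q : Pp d × Pp d => (WithLp.equiv 2 _ q.1).2 j := by
          simp only [← xL_apply]; fun_prop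
        exact IsClosed.preimage hc isClosed_Icc
      · rw [Set.setOf_forall]
        refine isClosed_iInter fun i => ?_
        rw [Set.setOf_forall]
        refine isClosed_iInter fun j => ?_
        by_cases hij : i = j
        · have he : {q : Pp d × Pp d | i ≠ j →
              ρ ≤ |(WithLp.equiv 2 _ q.1).2 i - (WithLp.equiv 2 _ q.1).2 j|} = Set.univ := by
            ext q; simp [hij]
          rw [he]; exact isClosed_univ
        · simp only [hij, ne_eq, not_false_iff, forall_true_left, true_implies]
          have hc : Continuous fun q : Pp d × Pp d =>
              |(WithLp.equiv 2 _ q.1).2 i - (WithLp.equiv 2 _ q.1).2 j| := by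
            simp only [← xL_apply]; fun_prop
          exact IsClosed.preimage hc isClosed_Ici
      · rw [Set.setOf_forall]
        refine isClosed_iInter fun j => ?_
        have hc : Continuous fun q : Pp d × Pp d => |(WithLp.equiv 2 _ q.1).1 j| := by
          simp only [← aL_apply]; fun_prop
        exact IsClosed.preimage hc isClosed_Iic
      · exact isClosed_eq continuous_snd.norm continuous_const
      · rw [Set.setOf_forall]
        refine isClosed_iInter fun k => ?_
        by_cases hk : (k:ℕ) = 2*d-1
        · have he : {q : Pp d × Pp d | (k:ℕ) ≠ 2*d-1 → Tmap d q.1 q.2 k = 0} = Set.univ := by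
            ext q; simp [hk]
          rw [he]; exact isClosed_univ
        · simp only [hk, ne_eq, not_false_iff, forall_true_left, true_implies]
          exact isClosed_eq (continuous_Tk d k) continuous_const
    have hbdd : Bornology.IsBounded S := by
      apply (Metric.isBounded_closedBall
        (x := (0 : Pp d × Pp d)) (r := Real.sqrt d * (M + 1) + 1)).subset
      rintro ⟨p, v⟩ ⟨hIcc, _, hA, hv1, _⟩
      rw [Metric.mem_closedBall, dist_zero_right, Prod.norm_def]
      have hA' : ‖(p.fst : Ee d)‖ ≤ Real.sqrt d * M := by
        refine euclid_norm_le d p.fst M hM fun j => ?_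
        exact hA j
      have hX' : ‖(p.snd : Ee d)‖ ≤ Real.sqrt d * 1 := by
        refine euclid_norm_le d p.snd 1 zero_le_one fun j => ?_
        have h := hIcc j
        rw [Set.mem_Icc] at h
        have h1 : -(1/2 : ℝ) ≤ (p.snd : Ee d) j := h.1
        have h2 : ((p.snd : Ee d) j : ℝ) ≤ 1/2 := h.2
        rw [abs_le]; constructor <;> linarith
      have hp : ‖p‖ ≤ Real.sqrt d * (M+1) := by
        rw [WithLp.prod_norm_eq_of_L2]
        calc Real.sqrt (‖p.fst‖^2 + ‖p.snd‖^2) ≤ ‖p.fst‖ + ‖p.snd‖ :=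
              sqrt_sq_add_sq_le _ _ (norm_nonneg _) (norm_nonneg _)
          _ ≤ Real.sqrt d * M + Real.sqrt d * 1 := add_le_add hA' hX'
          _ = Real.sqrt d * (M+1) := by ring
      have h2 : ‖v‖ ≤ Real.sqrt d * (M+1) + 1 := by
        rw [hv1]
        have : (0:ℝ) ≤ Real.sqrt d * (M+1) := by positivity
        linarith
      exact max_le (by linarith) h2
    have hcomp : IsCompact S := Metric.isCompact_of_isClosed_isBounded hclosed hbdd
    have hcont : Continuous fun q : Pp d × Pp d => ‖(WithLp.equiv 2 _ q.2).2‖ := by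
      simp only [← sndC_apply]; fun_prop
    obtain ⟨q0, hq0S, hmin⟩ := hcomp.exists_isMinOn hne hcont.continuousOn
    refine ⟨‖(WithLp.equiv 2 _ q0.2).2‖, hpos q0 hq0S, fun p v h1 h2 h3 h4 h5 => ?_⟩
    exact isMinOn_iff.mp hmin (p,v) ⟨h1, h2, h3, h4, h5⟩

end PronyAux

/-- at a point `(A⁰, X⁰)` with nodes in `[−1/2, 1/2]` pairwise
`ρ`-separated and amplitudes in `[m, M]` in absolute value, the preimage line
`JPM⁻¹(L)` of the last coordinate axis `L` under the Jacobian
`JPM = D PM(A⁰,X⁰)` is not contained in the amplitude subspace `ℝ^d × {0}`;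
moreover, its angle `θ` with this subspace (given by `sin θ = ‖v_X‖/‖v‖`) is
bounded below by a positive constant `c` depending only on `m, M, d, ρ`:
`‖(JPM⁻¹ μ)_X‖ ≥ c ‖JPM⁻¹ μ‖` for every nonzero `μ ∈ L`. -/


theorem prony_preimage_line_angle (m M ρ : ℝ) (d : ℕ)
    (hm : 0 < m) (hmM : m ≤ M) (hd : 1 ≤ d) (hρ : 0 < ρ) :
    ∃ c > (0 : ℝ),
      ∀ A0 X0 : EuclideanSpace ℝ (Fin d),
        (∀ j, X0 j ∈ Set.Icc (-(1 / 2) : ℝ) (1 / 2)) →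
        (∀ i j : Fin d, i ≠ j → ρ ≤ |X0 i - X0 j|) →
        (∀ j, m ≤ |A0 j| ∧ |A0 j| ≤ M) →
        ∀ J : WithLp 2 (EuclideanSpace ℝ (Fin d) × EuclideanSpace ℝ (Fin d)) ≃L[ℝ]
            EuclideanSpace ℝ (Fin (2 * d)),
          (J : WithLp 2 (EuclideanSpace ℝ (Fin d) × EuclideanSpace ℝ (Fin d)) →L[ℝ]
              EuclideanSpace ℝ (Fin (2 * d))) =
            fderiv ℝ (Prony d) ((WithLp.equiv 2 _).symm (A0, X0)) →
          ∀ μ : EuclideanSpace ℝ (Fin (2 * d)),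
            (∀ k : Fin (2 * d), (k : ℕ) ≠ 2 * d - 1 → μ k = 0) →
            μ ≠ 0 →
            (WithLp.equiv 2 _ (J.symm μ)).2 ≠ 0 ∧
            c * ‖J.symm μ‖ ≤ ‖(WithLp.equiv 2 _ (J.symm μ)).2‖ := by
  obtain ⟨ε, hε, hkey⟩ := PronyAux.key M ρ d hd hρ (le_trans hm.le hmM)
  refine ⟨ε, hε, ?_⟩
  intro A0 X0 hIcc hsep hAmp J hJ μ hμsupp hμ0
  set p0 : PronyAux.Pp d := (WithLp.equiv 2 _).symm (A0, X0) with hp0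
  have hT : (J : PronyAux.Pp d →L[ℝ] EuclideanSpace ℝ (Fin (2*d))) = PronyAux.Tmap d p0 := by
    haveI : ContinuousSMul ℝ (PronyAux.Pp d) := IsBoundedSMul.continuousSMul
    rw [hJ, (PronyAux.prony_hasFDerivAt d p0).fderiv]
  set v : PronyAux.Pp d := J.symm μ with hv
  have hv0 : v ≠ 0 := by
    intro h
    have h2 : μ = J (J.symm μ) := (J.apply_symm_apply μ).symm
    rw [← hv, h, map_zero] at h2
    exact hμ0 h2
  have hnv : (0:ℝ) < ‖v‖ := norm_pos_iff.mpr hv0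
  set u : PronyAux.Pp d := ‖v‖⁻¹ • v with hu
  have hu1 : ‖u‖ = 1 := by
    rw [hu, norm_smul, norm_inv, norm_norm, inv_mul_cancel₀ hnv.ne']
  have hpeq : (WithLp.equiv 2 _ p0) = (A0, X0) := by
    rw [hp0]; exact (WithLp.equiv 2 _).apply_symm_apply _
  have hIcc' : ∀ j, (WithLp.equiv 2 _ p0).2 j ∈ Set.Icc (-(1/2):ℝ) (1/2) := by
    rw [hpeq]; exact hIcc
  have hsep' : ∀ i j : Fin d, i ≠ j →
      ρ ≤ |(WithLp.equiv 2 _ p0).2 i - (WithLp.equiv 2 _ p0).2 j| := by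
    rw [hpeq]; exact hsep
  have hAmp' : ∀ j, |(WithLp.equiv 2 _ p0).1 j| ≤ M := by
    rw [hpeq]; exact fun j => (hAmp j).2
  have hTv : PronyAux.Tmap d p0 v = μ := by
    rw [← hT]; exact J.apply_symm_apply μ
  have hTu : ∀ k : Fin (2*d), (k:ℕ) ≠ 2*d-1 → PronyAux.Tmap d p0 u k = 0 := by
    intro k hk
    rw [hu, map_smul, hTv]
    have : (‖v‖⁻¹ • μ) k = ‖v‖⁻¹ • μ k := rfl
    rw [this, hμsupp k hk, smul_zero]
  have hk := hkey p0 u hIcc' hsep' hAmp' hu1 hTu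
  have huv : (WithLp.equiv 2 _ u).2 = ‖v‖⁻¹ • (WithLp.equiv 2 _ v).2 := by
    rw [hu]; simp
  rw [huv, norm_smul, norm_inv, norm_norm] at hk
  have hfinal : ε * ‖v‖ ≤ ‖(WithLp.equiv 2 _ v).2‖ := by
    rw [← mul_le_mul_iff_right₀ (inv_pos.mpr hnv)]
    calc ‖v‖⁻¹ * (ε * ‖v‖) = ε := by field_simp
      _ ≤ ‖v‖⁻¹ * ‖(WithLp.equiv 2 _ v).2‖ := hk
  constructor
  · intro h0
    rw [h0, norm_zero] at hfinal
    exact absurd hfinal (not_le.mpr (mul_pos hε hnv))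
  · exact hfinal
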